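/- (Theorem 1, convergence of Binary Matching Pursuit.) Let E be a finite-dimensional real inner product space, fix X ∈ E, and define F(W) = (1/2)‖X − W‖², so ∇F(W) = W − X. Let 𝔸 ⊆ E be a nonempty compact set of atoms that is symmetric (M ∈ 𝔸 implies −M ∈ 𝔸). For W in the linear span of 𝔸 define the atomic norm ‖W‖_𝔸 = inf{ Σ_M |c_M| : W = Σ_M c_M M, a finite linear combination of atoms M ∈ 𝔸 }. Let μ ∈ (0,1] and β > 0, and assume F is β-smooth with respect to the atomic norm: ‖Δ‖ ≤ √β · ‖Δ‖_𝔸 for all Δ in the span of 𝔸 (equivalently F(W+Δ) − F(W) ≤ ⟨∇F(W), Δ⟩ + (β/2)‖Δ‖_𝔸²). Consider iterates defined by: W^0 = 0, A^0 = ∅, and for each k ≥ 1 an atom M^k ∈ 𝔸 satisfying the μ-approximate greedy condition ⟨∇F(W^{k−1}), M^k⟩ ≤ μ · min_{M ∈ 𝔸} ⟨∇F(W^{k−1}), M⟩, with A^k = A^{k−1} ∪ {M^k}, and W^k a minimizer of F over the linear span of A^k (fully-corrective step). Then for every W* in the span of 𝔸 and every k ≥ 1, F(W^k) − F(W*) ≤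 (2β‖W*‖_𝔸²/μ²) · (1/k). -/

import Mathlib

open scoped RealInnerProductSpace

/-- The atomic norm of `W` w.r.t. an atom set `A`: the infimum of `ℓ1` norms of
coefficient vectors over all finite representations of `W` as linear combinations of
atoms in `A`. -/
noncomputable def atomicNorm {E : Type*} [NormedAddCommGroup E] [InnerProductSpace ℝ E]
    (A : Set E) (W : E) : ℝ :=
  sInf {s : ℝ | ∃ (n : ℕ) (c : Fin n → ℝ) (M : Fin n → E),
    (∀ i, M i ∈ A) ∧ W = ∑ i, c i • M i ∧ s = ∑ i, |c i|}

section Aux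
variable {E : Type*} [NormedAddCommGroup E] [InnerProductSpace ℝ E]

lemma atomicNorm_set_bddBelow (A : Set E) (W : E) :
    BddBelow {s : ℝ | ∃ (n : ℕ) (c : Fin n → ℝ) (M : Fin n → E),
      (∀ i, M i ∈ A) ∧ W = ∑ i, c i • M i ∧ s = ∑ i, |c i|} := by
  refine ⟨0, fun s hs => ?_⟩
  obtain ⟨n, c, M, -, -, rfl⟩ := hs
  positivity

lemma atomicNorm_atom_le (A : Set E) (M : E) (hM : M ∈ A) : atomicNorm A M ≤ 1 := by
  exact csInf_le (atomicNorm_set_bddBelow A M)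
    ⟨1, fun _ => 1, fun _ => M, fun _ => hM, by simp, by simp⟩

lemma dual_bound (A : Set E) (hAs : ∀ M ∈ A, -M ∈ A) (g Wv : E)
    (hW : Wv ∈ Submodule.span ℝ A) (m : ℝ) (hm0 : m ≤ 0)
    (hmle : ∀ M ∈ A, m ≤ ⟪g, M⟫) : m * atomicNorm A Wv ≤ ⟪g, Wv⟫ := by
  set S := {s : ℝ | ∃ (n : ℕ) (c : Fin n → ℝ) (M : Fin n → E),
    (∀ i, M i ∈ A) ∧ Wv = ∑ i, c i • M i ∧ s = ∑ i, |c i|} with hS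
  have hrepr := Submodule.mem_span_set'.mp hW
  obtain ⟨n₀, f₀, g₀, hsum₀⟩ := hrepr
  have hne : S.Nonempty :=
    ⟨∑ i, |f₀ i|, n₀, f₀, fun i => (g₀ i : E), fun i => (g₀ i).2, hsum₀.symm, rfl⟩
  have key : ∀ s ∈ S, m * s ≤ ⟪g, Wv⟫ := by
    rintro s ⟨n, c, M, hMA, hWeq, rfl⟩
    rw [hWeq]
    calc m * ∑ i, |c i| = ∑ i, m * |c i| := Finset.mul_sum _ _ _
      _ ≤ ∑ i, c i * ⟪g, M i⟫ := by
          apply Finset.sum_le_sum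
          intro i _
          rcases le_or_gt 0 (c i) with hc | hc
          · rw [abs_of_nonneg hc]
            nlinarith [hmle (M i) (hMA i)]
          · rw [abs_of_neg hc]
            have h2 := hmle (-M i) (hAs (M i) (hMA i))
            rw [inner_neg_right] at h2
            nlinarith
      _ = ⟪g, ∑ i, c i • M i⟫ := by
          rw [inner_sum]
          exact Finset.sum_congr rfl fun i _ => (real_inner_smul_right g (M i) (c i)).symm
  have hAN : atomicNorm A Wv = sInf S := rfl
  rw [hAN]
  rcases eq_or_lt_of_le hm0 with h0 | hneg
  · obtain ⟨s, hs⟩ := hne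
    have := key s hs
    rw [h0] at this ⊢
    simp only [zero_mul] at this ⊢
    exact this
  · apply le_of_forall_pos_le_add
    intro ε hε
    obtain ⟨s, hsS, hslt⟩ := Real.lt_sInf_add_pos hne (div_pos hε (neg_pos.mpr hneg))
    have h1 := key s hsS
    have h2 : m * (sInf S + ε / (-m)) < m * s := mul_lt_mul_of_neg_left hslt hneg
    have hm' : m ≠ 0 := ne_of_lt hneg
    have hexp : m * (sInf S + ε / (-m)) = m * sInf S - ε := by
      rw [div_neg, mul_add, mul_neg, mul_div_cancel₀ ε hm']
      ring
    linarith

end Aux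

/-- Theorem 1 (convergence of Binary Matching Pursuit): with `F(W) = (1/2)‖X − W‖²`,
a compact symmetric atom set `A`, `β`-smoothness w.r.t. the atomic norm, a
`μ`-approximate greedy atom selection and fully-corrective iterates starting from
`W⁰ = 0`, we have `F(Wᵏ) − F(W*) ≤ (2β‖W*‖_𝔸²/μ²)·(1/k)` for every `W*` in the span
of `A` and every `k ≥ 1`. -/
theorem stmt_9 {E : Type*} [NormedAddCommGroup E] [InnerProductSpace ℝ E]
    [FiniteDimensional ℝ E]
    (X : E) (F : E → ℝ) (hF : ∀ W, F W = (1 / 2) * ‖X - W‖ ^ 2)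
    (A : Set E) (hA : A.Nonempty) (hAc : IsCompact A) (hAs : ∀ M ∈ A, -M ∈ A)
    (μ β : ℝ) (hμ : μ ∈ Set.Ioc (0 : ℝ) 1) (hβ : 0 < β)
    (hsmooth : ∀ Δ ∈ Submodule.span ℝ A, ‖Δ‖ ≤ Real.sqrt β * atomicNorm A Δ)
    (W : ℕ → E) (Msel : ℕ → E)
    (hW0 : W 0 = 0)
    (hMsel : ∀ k, Msel k ∈ A)
    (hgreedy : ∀ k, ⟪W k - X, Msel k⟫ ≤ μ * sInf ((fun M => ⟪W k - X, M⟫) '' A))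
    (hmem : ∀ k, W (k + 1) ∈ Submodule.span ℝ (Msel '' Set.Iic k))
    (hcorr : ∀ k, ∀ W' ∈ Submodule.span ℝ (Msel '' Set.Iic k), F (W (k + 1)) ≤ F W')
    (Wstar : E) (hWstar : Wstar ∈ Submodule.span ℝ A) :
    ∀ k : ℕ, 1 ≤ k →
      F (W k) - F Wstar ≤ (2 * β * atomicNorm A Wstar ^ 2 / μ ^ 2) * (1 / (k : ℝ)) := by
  obtain ⟨hμ0, hμ1⟩ := hμ
  -- expansion of F
  have hFexp : ∀ W₀ Δ : E, F (W₀ + Δ) = F W₀ + ⟪W₀ - X, Δ⟫ + (1/2) * ‖Δ‖^2 := by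
    intro W₀ Δ
    rw [hF, hF]
    have h1 : X - (W₀ + Δ) = (X - W₀) - Δ := by abel
    rw [h1, norm_sub_sq_real]
    have h2 : ⟪W₀ - X, Δ⟫ = -⟪X - W₀, Δ⟫ := by
      have h3 : W₀ - X = -(X - W₀) := by abel
      rw [h3, inner_neg_left]
    rw [h2]; ring
  -- membership of iterates
  have Wmem : ∀ j : ℕ, W j ∈ Submodule.span ℝ (Msel '' Set.Iic j) := by
    intro j
    cases j with
    | zero => rw [hW0]; exact zero_mem _
    | succ j' =>
        exact Submodule.span_mono
          (Set.image_mono (Set.Iic_subset_Iic.mpr (Nat.le_succ j'))) (hmem j')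
  -- orthogonality of the gradient to the current span
  have orth : ∀ j : ℕ, ∀ V ∈ Submodule.span ℝ (Msel '' Set.Iic j),
      ⟪W (j+1) - X, V⟫ = 0 := by
    intro j V hV
    set c := ⟪W (j+1) - X, V⟫ with hc
    have hq : ∀ t : ℝ, 0 ≤ t * c + t^2 * ((1:ℝ)/2 * ‖V‖^2) := by
      intro t
      have hmem' : W (j+1) + t • V ∈ Submodule.span ℝ (Msel '' Set.Iic j) :=
        add_mem (hmem j) (Submodule.smul_mem _ t hV)
      have h1 := hcorr j _ hmem'
      rw [hFexp] at h1
      have hsm : ⟪W (j+1) - X, t • V⟫ = t * c := real_inner_smul_right _ _ _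
      have hns : ‖t • V‖^2 = t^2 * ‖V‖^2 := by
        rw [norm_smul, mul_pow, Real.norm_eq_abs, sq_abs]
      rw [hsm, hns] at h1
      nlinarith
    have hdnn : (0:ℝ) ≤ ‖V‖^2 := sq_nonneg _
    have hdpos : (0:ℝ) < ‖V‖^2 + 1 := by linarith
    set t₀ : ℝ := -c / (‖V‖^2 + 1) with ht₀def
    have ht : t₀ * (‖V‖^2 + 1) = -c := div_mul_cancel₀ _ hdpos.ne'
    have h1 := hq t₀
    have h2 : 0 ≤ (t₀ * c + t₀^2 * ((1:ℝ)/2 * ‖V‖^2)) * ((‖V‖^2 + 1)^2) :=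
      mul_nonneg h1 (by positivity)
    have h3 : (t₀ * c + t₀^2 * ((1:ℝ)/2 * ‖V‖^2)) * ((‖V‖^2 + 1)^2)
        = -(c^2 * (‖V‖^2 + 1)) + c^2 * ((1:ℝ)/2 * ‖V‖^2) := by
      linear_combination (c * (‖V‖^2 + 1) + (1:ℝ)/2 * ‖V‖^2 * (t₀ * (‖V‖^2 + 1) - c)) * ht
    rw [h3] at h2
    have hc2 : c^2 ≤ 0 := by nlinarith [mul_nonneg (sq_nonneg c) hdnn]
    have hceq : c^2 = 0 := le_antisymm hc2 (sq_nonneg c)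
    exact pow_eq_zero_iff (by norm_num) |>.mp hceq
  -- gradient is orthogonal to the current iterate
  have horth' : ∀ j : ℕ, ⟪W j - X, W j⟫ = 0 := by
    intro j
    cases j with
    | zero => rw [hW0]; simp
    | succ j' => exact orth j' _ (hmem j')
  -- monotone decrease
  have mono : ∀ j : ℕ, F (W (j+1)) ≤ F (W j) := fun j => hcorr j (W j) (Wmem j)
  -- bound on atom norms
  have hMn : ∀ j : ℕ, ‖Msel j‖^2 ≤ β := by
    intro j
    have h1 : ‖Msel j‖ ≤ Real.sqrt β * atomicNorm A (Msel j) :=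
      hsmooth _ (Submodule.subset_span (hMsel j))
    have h2 : atomicNorm A (Msel j) ≤ 1 := atomicNorm_atom_le A _ (hMsel j)
    have h3 : ‖Msel j‖ ≤ Real.sqrt β := by
      calc ‖Msel j‖ ≤ Real.sqrt β * atomicNorm A (Msel j) := h1
        _ ≤ Real.sqrt β * 1 := mul_le_mul_of_nonneg_left h2 (Real.sqrt_nonneg β)
        _ = Real.sqrt β := mul_one _
    nlinarith [Real.sq_sqrt hβ.le, norm_nonneg (Msel j), Real.sqrt_nonneg β]
  set ρ := atomicNorm A Wstar with hρdef
  rcases le_or_gt ρ 0 with hρ | hρ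
  · -- degenerate case: ‖Wstar‖ = 0
    have h1 : ‖Wstar‖ ≤ 0 := by
      have := hsmooth Wstar hWstar
      nlinarith [Real.sqrt_nonneg β]
    have h2 : Wstar = 0 := norm_le_zero_iff.mp h1
    intro k hk
    obtain ⟨j, rfl⟩ : ∃ j, k = j + 1 := ⟨k - 1, (Nat.succ_pred_eq_of_pos hk).symm⟩
    have h3 : F (W (j+1)) ≤ F Wstar := by
      rw [h2]; exact hcorr j 0 (zero_mem _)
    have h4 : (0:ℝ) ≤ (2 * β * ρ ^ 2 / μ ^ 2) * (1 / ((j+1 : ℕ) : ℝ)) := by positivity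
    linarith
  · -- main case
    set Cc := 2 * β * ρ^2 / μ^2 with hCcdef
    have hCc : 0 < Cc := by positivity
    -- one step of the analysis when the gap is positive
    have rec_pos : ∀ j : ℕ, 0 < F (W j) - F Wstar →
        F (W (j+1)) - F Wstar ≤ (F (W j) - F Wstar) - (F (W j) - F Wstar)^2 / Cc := by
      intro j ha
      set a := F (W j) - F Wstar with hadef
      set g := W j - X with hgdef
      set m := sInf ((fun M => ⟪g, M⟫) '' A) with hmdef
      have hcont : Continuous fun M : E => ⟪g, M⟫ :=
        Continuous.inner continuous_const continuous_id
      have hbdd : BddBelow ((fun M => ⟪g, M⟫) '' A) := (hAc.image hcont).bddBelow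
      have hmle : ∀ M ∈ A, m ≤ ⟪g, M⟫ := fun M hM => csInf_le hbdd ⟨M, hM, rfl⟩
      have hm0 : m ≤ 0 := by
        obtain ⟨M₀, hM₀⟩ := hA
        have h1 := hmle M₀ hM₀
        have h2 := hmle (-M₀) (hAs M₀ hM₀)
        rw [inner_neg_right] at h2
        linarith
      have horthW : ⟪g, W j⟫ = 0 := horth' j
      have hdual : m * ρ ≤ ⟪g, Wstar⟫ := dual_bound A hAs g Wstar hWstar m hm0 hmle
      have hconv : ⟪g, Wstar⟫ ≤ -a := by
        have heq : W j + (Wstar - W j) = Wstar := by abel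
        have h1 : F Wstar = F (W j) + ⟪g, Wstar - W j⟫ + (1/2) * ‖Wstar - W j‖^2 := by
          rw [← hFexp (W j) (Wstar - W j), heq]
        have h2 : ⟪g, Wstar - W j⟫ = ⟪g, Wstar⟫ - ⟪g, W j⟫ := inner_sub_right _ _ _
        rw [h2, horthW] at h1
        nlinarith [sq_nonneg ‖Wstar - W j‖]
      have hma : m ≤ -a / ρ := by
        rw [le_div_iff₀ hρ]
        linarith
      set γ := μ * a / (β * ρ) with hγdef
      have hγpos : 0 < γ := div_pos (mul_pos hμ0 ha) (mul_pos hβ hρ)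
      have hstep : F (W (j+1)) ≤ F (W j) + γ * ⟪g, Msel j⟫ + (1/2) * (γ^2 * ‖Msel j‖^2) := by
        have hmm : W j + γ • Msel j ∈ Submodule.span ℝ (Msel '' Set.Iic j) :=
          add_mem (Wmem j)
            (Submodule.smul_mem _ γ (Submodule.subset_span ⟨j, le_refl j, rfl⟩))
        have h1 := hcorr j _ hmm
        rw [hFexp] at h1
        have hsm : ⟪W j - X, γ • Msel j⟫ = γ * ⟪g, Msel j⟫ := real_inner_smul_right _ _ _
        have hns : ‖γ • Msel j‖^2 = γ^2 * ‖Msel j‖^2 := by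
          rw [norm_smul, mul_pow, Real.norm_eq_abs, sq_abs]
        rw [hsm, hns] at h1
        linarith
      have hgm : ⟪g, Msel j⟫ ≤ μ * m := hgreedy j
      have hnorm : ‖Msel j‖^2 ≤ β := hMn j
      have t1 : γ * ⟪g, Msel j⟫ ≤ γ * (μ * m) := mul_le_mul_of_nonneg_left hgm hγpos.le
      have t2 : γ * (μ * m) ≤ γ * (μ * (-a / ρ)) :=
        mul_le_mul_of_nonneg_left (mul_le_mul_of_nonneg_left hma hμ0.le) hγpos.le
      have t3 : γ^2 * ‖Msel j‖^2 ≤ γ^2 * β := mul_le_mul_of_nonneg_left hnorm (sq_nonneg γ)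
      have hid : γ * (μ * (-a / ρ)) + (1/2) * (γ^2 * β) = -(a^2 / Cc) := by
        rw [hγdef, hCcdef]
        field_simp
        ring
      linarith
    -- the induction giving the 1/k rate
    have main : ∀ j : ℕ, F (W (j+1)) - F Wstar ≤ Cc / ((j : ℝ) + 1) := by
      intro j
      induction j with
      | zero =>
          rcases le_or_gt (F (W 0) - F Wstar) 0 with h | h
          · have h1 := mono 0
            simp only [Nat.cast_zero, zero_add, div_one]
            linarith
          · have h2 := rec_pos 0 h
            set a := F (W 0) - F Wstar with hadef
            have hq : a^2 / Cc * Cc = a^2 := div_mul_cancel₀ _ hCc.ne'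
            have hqn : 0 ≤ a^2 / Cc := div_nonneg (sq_nonneg a) hCc.le
            simp only [Nat.cast_zero, zero_add, div_one]
            nlinarith [sq_nonneg (a - Cc)]
      | succ j ih =>
          rcases le_or_gt (F (W (j+1)) - F Wstar) 0 with h | h
          · have h1 := mono (j+1)
            have h4 : (0:ℝ) ≤ Cc / ((j:ℝ) + 1 + 1) := by positivity
            push_cast
            linarith
          · have h2 := rec_pos (j+1) h
            set a := F (W (j+1)) - F Wstar with hadef
            set n : ℝ := (j : ℝ) + 1 with hndef
            have hn1 : (1:ℝ) ≤ n := by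
              have : (0:ℝ) ≤ (j:ℝ) := Nat.cast_nonneg j
              rw [hndef]; linarith
            have hnpos : (0:ℝ) < n := by linarith
            have han : a ≤ Cc / n := ih
            have h4 : a * n ≤ Cc := (le_div_iff₀ hnpos).mp han
            have h5 : a ≤ Cc := le_trans han (div_le_self hCc.le hn1)
            have h4' : 0 ≤ Cc - a * n := by linarith
            have h5' : 0 ≤ Cc - a := by linarith
            have hL : a - a^2 / Cc = (a * Cc - a^2) / Cc := by field_simp
            have hfin : a - a^2 / Cc ≤ Cc / (n + 1) := by
              rw [hL, div_le_div_iff₀ hCc (by linarith : (0:ℝ) < n + 1)]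
              nlinarith [mul_nonneg h4' h5', sq_nonneg a]
            push_cast
            calc F (W (j+1+1)) - F Wstar ≤ a - a^2 / Cc := h2
              _ ≤ Cc / (n + 1) := hfin
              _ = Cc / ((j:ℝ) + 1 + 1) := by rw [hndef]
    intro k hk
    obtain ⟨j, rfl⟩ : ∃ j, k = j + 1 := ⟨k - 1, (Nat.succ_pred_eq_of_pos hk).symm⟩
    have h1 := main j
    rw [mul_one_div]
    push_cast
    exact h1
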